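/- Fix γ ∈ (−2, −1), Λ > 0, T > 0. Suppose (λ_s)_{s∈[0,T]} is a family of probability measures on [0,∞), and κ_T > 0 is such that for all sufficiently small ε > 0: ∫₀^T λ_s({1}) ds ≤ κ_T ε^{|γ|−1} + κ_T ε^{|γ|} ∫₀^T ∫₀^∞ |r²−1|^γ 1_{|r²−1| > ε} λ_s(dr) ds. Suppose further there exists g : [0,∞) → [0,∞) with g(x) → ∞ as x → ∞, x ↦ x g(1/x) non-decreasing, and M := ∫₀^T ∫₀^∞ g(1/|r²−1|) 1_{r ≠ 1} λ_s(dr) ds < ∞. Then ∫₀^T λ_s({1}) ds = 0. -/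

import Mathlib

open MeasureTheory Filter Topology

/-- If `∫₀^T λ_s({1}) ds ≤ κ ε^{|γ|-1} + κ ε^{|γ|} ∫₀^T ∫ |r²-1|^γ 1_{|r²-1|>ε} dλ_s ds`
for all small `ε`, and there is `g → ∞` with `x ↦ x g(1/x)` nondecreasing and
`∫₀^T ∫_{r≠1} g(1/|r²-1|) dλ_s ds < ∞`, then `∫₀^T λ_s({1}) ds = 0`. -/
theorem stmt11 (γ Λ T κ : ℝ) (hγ : γ ∈ Set.Ioo (-2:ℝ) (-1)) (hΛ : 0 < Λ)
    (hT : 0 < T) (hκ : 0 < κ)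
    (lam : ℝ → Measure ℝ) (hprob : ∀ s, IsProbabilityMeasure (lam s))
    (g : ℝ → ℝ) (hg0 : ∀ x, 0 ≤ g x)
    (hgtop : Tendsto g atTop atTop)
    (hgmono : ∀ x y : ℝ, 0 < x → x ≤ y → x * g (1/x) ≤ y * g (1/y))
    (hM : ∫⁻ s in Set.Icc (0:ℝ) T, ∫⁻ r in {r : ℝ | r ≠ 1},
        ENNReal.ofReal (g (1 / |r^2 - 1|)) ∂(lam s) < ⊤)
    (ε₀ : ℝ) (hε₀ : 0 < ε₀)
    (hmain : ∀ ε : ℝ, 0 < ε → ε < ε₀ →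
      ∫⁻ s in Set.Icc (0:ℝ) T, (lam s) {1} ≤
        ENNReal.ofReal (κ * ε ^ (|γ| - 1)) +
        ENNReal.ofReal (κ * ε ^ |γ|) *
          ∫⁻ s in Set.Icc (0:ℝ) T, ∫⁻ r in {r : ℝ | ε < |r^2 - 1|},
            ENNReal.ofReal (|r^2 - 1| ^ γ) ∂(lam s)) :
    ∫⁻ s in Set.Icc (0:ℝ) T, (lam s) {1} = 0 := by
  set A := ∫⁻ s in Set.Icc (0:ℝ) T, (lam s) {1} with hA
  set M := ∫⁻ s in Set.Icc (0:ℝ) T, ∫⁻ r in {r : ℝ | r ≠ 1},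
      ENNReal.ofReal (g (1 / |r^2 - 1|)) ∂(lam s) with hMdef
  have hMne : M ≠ ⊤ := hM.ne
  have hγ0 : γ < 0 := lt_trans hγ.2 (by norm_num)
  have hγ1 : (1:ℝ) < |γ| := by
    rw [abs_of_neg hγ0]; linarith [hγ.2]
  have habs : Measurable fun r : ℝ => |r ^ 2 - 1| :=
    (continuous_abs.comp ((continuous_pow 2).sub continuous_const)).measurable
  -- key bound
  have key : ∀ ε : ℝ, 0 < ε → ε < ε₀ → 1 ≤ g (1/ε) →
      A ≤ ENNReal.ofReal (κ * ε ^ (|γ| - 1)) + ENNReal.ofReal (κ / g (1/ε)) * M := by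
    intro ε hε hε' hgε
    have hG : 0 < g (1/ε) := lt_of_lt_of_le one_pos hgε
    refine (hmain ε hε hε').trans (add_le_add_right ?_ _)
    rw [← lintegral_const_mul' _ _ ENNReal.ofReal_ne_top,
        ← lintegral_const_mul' _ _ ENNReal.ofReal_ne_top]
    refine lintegral_mono fun s => ?_
    rw [← lintegral_const_mul' _ _ ENNReal.ofReal_ne_top,
        ← lintegral_const_mul' _ _ ENNReal.ofReal_ne_top]
    have hS : MeasurableSet {r : ℝ | ε < |r ^ 2 - 1|} :=
      measurableSet_lt measurable_const habs
    have hS' : MeasurableSet {r : ℝ | r ≠ 1} :=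
      (measurableSet_singleton (1:ℝ)).compl
    rw [← lintegral_indicator hS, ← lintegral_indicator hS']
    refine lintegral_mono fun r => ?_
    by_cases hr : ε < |r ^ 2 - 1|
    · have hy : (0:ℝ) < |r ^ 2 - 1| := lt_trans hε hr
      have hr1 : r ∈ {r : ℝ | r ≠ 1} := by
        intro h
        rw [h] at hy; norm_num at hy
      rw [Set.indicator_of_mem (show r ∈ {r : ℝ | ε < |r ^ 2 - 1|} from hr),
        Set.indicator_of_mem hr1]
      rw [← ENNReal.ofReal_mul (by positivity), ← ENNReal.ofReal_mul (by positivity)]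
      refine ENNReal.ofReal_le_ofReal ?_
      set y := |r ^ 2 - 1| with hy'
      have h1 : ε ^ |γ| * y ^ γ ≤ ε / y := by
        have e1 : y ^ γ = (y ^ |γ|)⁻¹ := by
          rw [abs_of_neg hγ0, ← Real.rpow_neg hy.le, neg_neg]
        have e2 : ε ^ |γ| * y ^ γ = (ε / y) ^ |γ| := by
          rw [e1, Real.div_rpow hε.le hy.le, div_eq_mul_inv]
        rw [e2]
        calc (ε / y) ^ |γ| ≤ (ε / y) ^ (1:ℝ) :=
              Real.rpow_le_rpow_of_exponent_ge (div_pos hε hy)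
                ((div_le_one hy).2 hr.le) hγ1.le
          _ = ε / y := Real.rpow_one _
      have h2 : ε / y ≤ g (1/y) / g (1/ε) := by
        rw [div_le_div_iff₀ hy hG]
        have := hgmono ε y hε hr.le
        linarith [this]
      calc κ * ε ^ |γ| * y ^ γ = κ * (ε ^ |γ| * y ^ γ) := by ring
        _ ≤ κ * (g (1/y) / g (1/ε)) :=
            mul_le_mul_of_nonneg_left (h1.trans h2) hκ.le
        _ = κ / g (1/ε) * g (1/y) := by ring
    · rw [Set.indicator_of_notMem (show r ∉ {r : ℝ | ε < |r ^ 2 - 1|} from hr)]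
      exact zero_le
  -- limits
  have hinv : Tendsto (fun ε : ℝ => g (1/ε)) (𝓝[>] 0) atTop := by
    exact hgtop.comp (tendsto_inv_nhdsGT_zero.congr fun x => (one_div x).symm)
  have hev : ∀ᶠ ε in 𝓝[>] (0:ℝ),
      A ≤ ENNReal.ofReal (κ * ε ^ (|γ| - 1)) + ENNReal.ofReal (κ / g (1/ε)) * M := by
    have e1 : ∀ᶠ ε in 𝓝[>] (0:ℝ), ε < ε₀ :=
      (eventually_lt_nhds hε₀).filter_mono nhdsWithin_le_nhds
    filter_upwards [e1, hinv.eventually_ge_atTop 1, self_mem_nhdsWithin]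
      with ε h1 h2 h3
    exact key ε h3 h1 h2
  have t1 : Tendsto (fun ε : ℝ => ENNReal.ofReal (κ * ε ^ (|γ| - 1))) (𝓝[>] 0) (𝓝 0) := by
    have hc : ContinuousAt (fun x : ℝ => x ^ (|γ| - 1)) 0 :=
      Real.continuousAt_rpow_const 0 _ (Or.inr (by linarith))
    have h0 : Tendsto (fun ε : ℝ => ε ^ (|γ| - 1)) (𝓝[>] 0) (𝓝 0) := by
      have := hc.tendsto.mono_left (nhdsWithin_le_nhds (s := Set.Ioi (0:ℝ)))
      simpa [Real.zero_rpow (by linarith : |γ| - 1 ≠ 0)] using this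
    have h1 : Tendsto (fun ε : ℝ => κ * ε ^ (|γ| - 1)) (𝓝[>] 0) (𝓝 (κ * 0)) :=
      tendsto_const_nhds.mul h0
    have h2 := ENNReal.tendsto_ofReal h1
    simpa using h2
  have t2 : Tendsto (fun ε : ℝ => ENNReal.ofReal (κ / g (1/ε)) * M) (𝓝[>] 0) (𝓝 0) := by
    have h0 : Tendsto (fun ε : ℝ => κ / g (1/ε)) (𝓝[>] 0) (𝓝 0) :=
      Tendsto.div_atTop tendsto_const_nhds hinv
    have := ENNReal.Tendsto.mul_const (ENNReal.tendsto_ofReal h0) (Or.inr hMne)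
    simpa using this
  have tt : Tendsto (fun ε : ℝ =>
      ENNReal.ofReal (κ * ε ^ (|γ| - 1)) + ENNReal.ofReal (κ / g (1/ε)) * M)
      (𝓝[>] 0) (𝓝 0) := by
    simpa using t1.add t2
  exact le_zero_iff.mp (ge_of_tendsto tt hev)
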